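/- Let K/F be a cyclic Galois field extension of degree n with Galois group generated by τ, and let f = Σ_{i=0}^{n-1} L(yᵢ)∘τⁱ ∈ End_F(K). Then f is invertible if and only if the element y₀ + y₁t + ⋯ + y_{n-1}t^{n-1} of the cyclic algebra (K/F, τ, 1) has nonzero reduced norm, i.e., is invertible in (K/F, τ, 1). -/

import Mathlib

open Module LinearMap

section aux
variable {F K : Type*} [Field F] [Field K] [Algebra F K]
variable (n : ℕ) [NeZero n] (τ : K ≃ₐ[F] K)

noncomputable def Phi9 : (ZMod n → K) →ₗ[F] (K →ₗ[F] K) :=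
  ∑ i : ZMod n, ((LinearMap.llcomp F K K K).flip (τ ^ i.val).toLinearMap) ∘ₗ
    (LinearMap.mul F K) ∘ₗ (LinearMap.proj i)

lemma Phi9_apply (y : ZMod n → K) :
    Phi9 n τ y = ∑ i : ZMod n, LinearMap.mul F K (y i) ∘ₗ (τ ^ i.val).toLinearMap := by
  simp only [Phi9, LinearMap.sum_apply, LinearMap.comp_apply, LinearMap.proj_apply,
    LinearMap.flip_apply, LinearMap.llcomp_apply']

lemma Phi9_apply_apply (y : ZMod n → K) (x : K) :
    Phi9 n τ y x = ∑ i : ZMod n, y i * (τ ^ i.val) x := by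
  simp [Phi9_apply, LinearMap.sum_apply]

lemma pow_val_add (h : orderOf τ = n) (a b : ZMod n) :
    τ ^ (a + b).val = τ ^ a.val * τ ^ b.val := by
  have h2 := pow_mod_orderOf τ (a.val + b.val)
  rw [h] at h2
  rw [ZMod.val_add, h2, pow_add]

lemma Phi9_conv (h : orderOf τ = n) (y z : ZMod n → K) :
    Phi9 n τ (fun k => ∑ j : ZMod n, y j * (τ ^ j.val) (z (k - j))) =
      Phi9 n τ y ∘ₗ Phi9 n τ z := by
  ext x
  simp only [LinearMap.comp_apply, Phi9_apply_apply, map_sum, Finset.mul_sum]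
  simp only [Finset.sum_mul]
  conv_lhs => rw [Finset.sum_comm]
  conv_rhs => rw [Finset.sum_comm]
  refine Finset.sum_congr rfl fun j _ => ?_
  refine Fintype.sum_equiv (Equiv.subRight j) _ _ fun k => ?_
  have hpow : (τ ^ j.val) ((τ ^ (k - j).val) x) = (τ ^ k.val) x := by
    have := pow_val_add n τ h j (k - j)
    rw [add_sub_cancel] at this
    rw [this]; rfl
  simp only [Equiv.subRight_apply, map_mul, hpow, mul_assoc]

lemma Phi9_delta :
    Phi9 n τ (fun k : ZMod n => if k = 0 then (1 : K) else 0) = LinearMap.id := by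
  ext x
  rw [Phi9_apply_apply]
  rw [Finset.sum_eq_single (0 : ZMod n)]
  · simp
  · intro b _ hb; simp [hb]
  · simp

end aux

theorem stmt9 {F K : Type*} [Field F] [Field K] [Algebra F K] [FiniteDimensional F K]
    [IsGalois F K] (n : ℕ) [NeZero n] (hn : Module.finrank F K = n)
    (τ : K ≃ₐ[F] K) (hτ : ∀ σ : K ≃ₐ[F] K, σ ∈ Subgroup.zpowers τ)
    (y : ZMod n → K) (f : K →ₗ[F] K)
    (hf : f = ∑ i : ZMod n, LinearMap.mul F K (y i) ∘ₗ (τ ^ i.val).toLinearMap) :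
    Function.Bijective f ↔
      ∃ z : ZMod n → K,
        (fun k => ∑ j : ZMod n, y j * (τ ^ j.val) (z (k - j))) =
          (fun k : ZMod n => if k = 0 then (1 : K) else 0) ∧
        (fun k => ∑ j : ZMod n, z j * (τ ^ j.val) (y (k - j))) =
          (fun k : ZMod n => if k = 0 then (1 : K) else 0) := by
  have hcard : Fintype.card (K ≃ₐ[F] K) = n := by
    rw [← Nat.card_eq_fintype_card, IsGalois.card_aut_eq_finrank, hn]
  have hord : orderOf τ = n := by
    rw [orderOf_eq_card_of_forall_mem_zpowers hτ, Nat.card_eq_fintype_card, hcard]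
  have hf' : f = Phi9 n τ y := by rw [hf, Phi9_apply]
  -- injectivity of Phi9
  have hinjpow : Function.Injective
      (fun i : ZMod n => ((τ ^ i.val : K ≃ₐ[F] K) : K →* K)) := by
    intro i j hij
    have h2 : (τ : K ≃ₐ[F] K) ^ i.val = τ ^ j.val := by
      ext x
      exact DFunLike.congr_fun hij x
    rw [pow_eq_pow_iff_modEq, hord] at h2
    have := (Nat.ModEq.eq_of_lt_of_lt h2 (ZMod.val_lt i) (ZMod.val_lt j))
    exact ZMod.val_injective n this
  have hli : LinearIndependent K
      (fun i : ZMod n => (((τ ^ i.val : K ≃ₐ[F] K) : K →* K) : K → K)) :=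
    (linearIndependent_monoidHom K K).comp _ hinjpow
  have hPhiInj : Function.Injective (Phi9 (F := F) (K := K) n τ) := by
    rw [← LinearMap.ker_eq_bot, LinearMap.ker_eq_bot']
    intro w hw
    have h0 : ∑ i : ZMod n, w i • (((τ ^ i.val : K ≃ₐ[F] K) : K →* K) : K → K) = 0 := by
      funext x
      have := DFunLike.congr_fun hw x
      rw [Phi9_apply_apply] at this
      simpa [Finset.sum_apply] using this
    funext i
    exact Fintype.linearIndependent_iff.mp hli w h0 i
  have hPhiBij : Function.Bijective (Phi9 (F := F) (K := K) n τ) := by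
    refine ⟨hPhiInj, ?_⟩
    rw [← LinearMap.injective_iff_surjective_of_finrank_eq_finrank ?_] at *
    · exact hPhiInj
    · rw [Module.finrank_linearMap, hn, Module.finrank_pi_fintype]
      simp [hn, Finset.sum_const, ZMod.card]
  constructor
  · intro hbij
    rw [hf'] at hbij
    let e := LinearEquiv.ofBijective _ hbij
    obtain ⟨z, hz⟩ := hPhiBij.2 (e.symm : K →ₗ[F] K)
    refine ⟨z, ?_, ?_⟩
    · apply hPhiInj
      rw [Phi9_conv n τ hord, hz, Phi9_delta]
      ext x
      exact e.apply_symm_apply x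
    · apply hPhiInj
      rw [Phi9_conv n τ hord, hz, Phi9_delta]
      ext x
      exact e.symm_apply_apply x
  · rintro ⟨z, h1, h2⟩
    have e1 : Phi9 n τ y ∘ₗ Phi9 n τ z = LinearMap.id := by
      rw [← Phi9_conv n τ hord, h1, Phi9_delta]
    have e2 : Phi9 n τ z ∘ₗ Phi9 n τ y = LinearMap.id := by
      rw [← Phi9_conv n τ hord, h2, Phi9_delta]
    rw [hf']
    refine Function.bijective_iff_has_inverse.mpr ⟨Phi9 n τ z, ?_, ?_⟩
    · intro x; exact DFunLike.congr_fun e2 x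
    · intro x; exact DFunLike.congr_fun e1 x
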